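/- Let G be a graph, let C ⊆ G be a cycle, and let P = x…y ⊆ G be a path with both endpoints x, y on C. If ‖P‖ < d_C(x,y), where d_C(x,y) is the distance from x to y within the cycle C and ‖P‖ is the number of edges of P, then G contains a cycle C′ with |C|/2 < |C′| < |C| (lengths measured in number of vertices). -/

import Mathlib

open SimpleGraph Walk

namespace GallaiStmt5Aux

variable {V : Type*} {G : SimpleGraph V}

/-- Lift a walk whose `toSubgraph` is contained in `H` to a walk in `H.coe`
of the same length. -/
lemma exists_coe_walk {H : G.Subgraph} :
    ∀ {u v : V} (q : G.Walk u v), q.toSubgraph ≤ H →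
      ∀ (hu : u ∈ H.verts) (hv : v ∈ H.verts),
        ∃ q' : H.coe.Walk ⟨u, hu⟩ ⟨v, hv⟩, q'.length = q.length := by
  intro u v q
  induction q with
  | nil => exact fun _ hu hv => ⟨.nil, rfl⟩
  | cons h q ih =>
    intro hle hu hv
    rw [Walk.toSubgraph, sup_le_iff] at hle
    have hadj : H.Adj _ _ := hle.1.2 rfl
    obtain ⟨q', hq'⟩ := ih hle.2 hadj.snd_mem hv
    exact ⟨.cons (show H.coe.Adj ⟨_, hu⟩ ⟨_, hadj.snd_mem⟩ from hadj) q', by simp [hq']⟩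

/-- A path from `u` to `v` containing the edge `s(u,v)` has length 1. -/
lemma length_eq_one_of_edge_mem {u v : V} {p : G.Walk u v} (hp : p.IsPath)
    (he : s(u, v) ∈ p.edges) : p.length = 1 := by
  cases p with
  | nil => simp at he
  | cons h q =>
    rw [Walk.edges_cons, List.mem_cons] at he
    rw [Walk.cons_isPath_iff] at hp
    rcases he with he | he
    · rw [Sym2.eq_iff] at he
      rcases he with ⟨-, hb⟩ | ⟨hub, -⟩
      · subst hb
        rw [Walk.isPath_iff_eq_nil] at hp
        · rw [hp.1]; rfl
      · exact absurd hub h.ne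
    · exact absurd (q.fst_mem_support_of_mem_edges he) hp.2

/-- Gluing two paths with the same distinct endpoints, meeting only in the
endpoints, gives a cycle (when one of them has length at least 2). -/
lemma glue_isCycle {s t : V} {q : G.Walk s t} {r : G.Walk t s}
    (hq : q.IsPath) (hr : r.IsPath) (hst : s ≠ t) (hr2 : 2 ≤ r.length)
    (hint : ∀ v, v ∈ q.support → v ∈ r.support → v = s ∨ v = t) :
    (q.append r).IsCycle := by
  have hsq : s ∉ q.support.tail := by
    have := hq.support_nodup
    rw [q.support_eq_cons, List.nodup_cons] at this
    exact this.1
  have htr : t ∉ r.support.tail := by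
    have := hr.support_nodup
    rw [r.support_eq_cons, List.nodup_cons] at this
    exact this.1
  rw [Walk.isCycle_def]
  refine ⟨⟨?_⟩, ?_, ?_⟩
  · rw [Walk.edges_append, List.nodup_append]
    refine ⟨hq.isTrail.edges_nodup, hr.isTrail.edges_nodup, ?_⟩
    intro e heq e' her hee
    subst hee
    induction e using Sym2.ind with
    | _ a b =>
      have hab : a ≠ b := (q.adj_of_mem_edges heq).ne
      have ha := hint a (q.fst_mem_support_of_mem_edges heq)
        (r.fst_mem_support_of_mem_edges her)
      have hb := hint b (q.snd_mem_support_of_mem_edges heq)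
        (r.snd_mem_support_of_mem_edges her)
      have h1 : s(t, s) ∈ r.edges := by
        rcases ha with rfl | rfl <;> rcases hb with rfl | rfl
        · exact absurd rfl hab
        · rwa [Sym2.eq_swap] at her
        · exact her
        · exact absurd rfl hab
      have := length_eq_one_of_edge_mem hr h1
      omega
  · intro hnil
    have := congrArg Walk.length hnil
    rw [Walk.length_append] at this
    rw [Walk.length_nil] at this
    omega
  · rw [Walk.tail_support_append, List.nodup_append]
    refine ⟨hq.support_nodup.tail, hr.support_nodup.tail, ?_⟩
    intro v hv1 v' hv2 hvv
    subst hvv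
    rcases hint v (List.mem_of_mem_tail hv1) (List.mem_of_mem_tail hv2) with rfl | rfl
    · exact hsq hv1
    · exact htr hv2

/-- The two arcs into which an inner vertex splits a cycle are paths. -/
lemma arc_paths [DecidableEq V] {x' : V} {c₁ : G.Walk x' x'} (hc : c₁.IsCycle) {y' : V}
    (hy : y' ∈ c₁.support) (hne : y' ≠ x') :
    (c₁.takeUntil y' hy).IsPath ∧ (c₁.dropUntil y' hy).IsPath := by
  set A := c₁.takeUntil y' hy with hAdef
  set B := c₁.dropUntil y' hy with hBdef
  have hspec : A.append B = c₁ := c₁.take_spec hy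
  have htail : A.support.tail ++ B.support.tail = c₁.support.tail := by
    rw [← Walk.tail_support_append, hspec]
  have hT : (A.support.tail ++ B.support.tail).Nodup := by rw [htail]; exact hc.support_nodup
  rw [List.nodup_append] at hT
  obtain ⟨hAn, hBn, hdisj⟩ := hT
  have hxB : x' ∈ B.support.tail := by
    have : x' ∈ B.support := B.end_mem_support
    rw [B.support_eq_cons, List.mem_cons] at this
    rcases this with h | h
    · exact absurd h.symm hne
    · exact h
  have hyA : y' ∈ A.support.tail := by
    have : y' ∈ A.support := A.end_mem_support
    rw [A.support_eq_cons, List.mem_cons] at this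
    rcases this with h | h
    · exact absurd h hne
    · exact h
  constructor
  · apply Walk.IsPath.mk'
    rw [A.support_eq_cons, List.nodup_cons]
    exact ⟨fun h => hdisj _ h _ hxB rfl, hAn⟩
  · apply Walk.IsPath.mk'
    rw [B.support_eq_cons, List.nodup_cons]
    exact ⟨fun h => hdisj _ hyA _ h rfl, hBn⟩

/-- Extract from a short path between vertices of `H` a short path whose
interior avoids `H`. -/
lemma extract (H : G.Subgraph) (hconn : H.coe.Connected) :
    ∀ (n : ℕ) {x y : V} (p : G.Walk x y), p.length = n → p.IsPath →
      ∀ (hx : x ∈ H.verts) (hy : y ∈ H.verts),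
        p.length < H.coe.dist ⟨x, hx⟩ ⟨y, hy⟩ →
        ∃ (x' y' : V) (hx' : x' ∈ H.verts) (hy' : y' ∈ H.verts) (p' : G.Walk x' y'),
          p'.IsPath ∧ p'.length < H.coe.dist ⟨x', hx'⟩ ⟨y', hy'⟩ ∧
          ∀ v ∈ p'.support, v ∈ H.verts → v = x' ∨ v = y' := by
  intro n
  induction n using Nat.strong_induction_on with
  | _ n ih =>
    intro x y p hlen hp hx hy hshort
    classical
    by_cases hcase : ∃ v, v ∈ p.support ∧ v ∈ H.verts ∧ v ≠ x ∧ v ≠ y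
    · obtain ⟨v, hvs, hvH, hvx, hvy⟩ := hcase
      have hspec := p.take_spec hvs
      have hlensum : (p.takeUntil v hvs).length + (p.dropUntil v hvs).length = p.length := by
        rw [← Walk.length_append, hspec]
      have h1 : 1 ≤ (p.takeUntil v hvs).length := by
        rcases Nat.eq_zero_or_pos (p.takeUntil v hvs).length with h | h
        · exact absurd (Walk.eq_of_length_eq_zero h).symm hvx
        · exact h
      have h2 : 1 ≤ (p.dropUntil v hvs).length := by
        rcases Nat.eq_zero_or_pos (p.dropUntil v hvs).length with h | h
        · exact absurd (Walk.eq_of_length_eq_zero h) hvy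
        · exact h
      have htri := hconn.dist_triangle (u := ⟨x, hx⟩) (v := ⟨v, hvH⟩) (w := ⟨y, hy⟩)
      rcases lt_or_ge (p.takeUntil v hvs).length (H.coe.dist ⟨x, hx⟩ ⟨v, hvH⟩) with h | h
      · exact ih (p.takeUntil v hvs).length (by omega) _ rfl (hp.takeUntil hvs) hx hvH h
      · have h' : (p.dropUntil v hvs).length < H.coe.dist ⟨v, hvH⟩ ⟨y, hy⟩ := by omega
        exact ih (p.dropUntil v hvs).length (by omega) _ rfl (hp.dropUntil hvs) hvH hy h'
    · push_neg at hcase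
      refine ⟨x, y, hx, hy, p, hp, hshort, fun v hvs hvH => ?_⟩
      by_cases h1 : v = x
      · exact Or.inl h1
      · exact Or.inr (hcase v hvs hvH h1)

end GallaiStmt5Aux

open GallaiStmt5Aux in
/-- If `C ⊆ G` is a cycle and `P = x…y ⊆ G` is a path with
`x, y ∈ C` and `‖P‖ < d_C(x,y)`, then `G` has a cycle `C'` with
`|C|/2 < |C'| < |C|`. (For a cycle, the number of vertices equals the number of
edges, i.e. the length of the corresponding closed walk.) -/
theorem gallai_stmt5 {V : Type*} (G : SimpleGraph V) {w : V}
    (c : G.Walk w w) (hc : c.IsCycle)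
    {x y : V} (p : G.Walk x y) (hp : p.IsPath)
    (hx : x ∈ c.toSubgraph.verts) (hy : y ∈ c.toSubgraph.verts)
    (hshort : p.length < c.toSubgraph.coe.dist ⟨x, hx⟩ ⟨y, hy⟩) :
    ∃ (w' : V) (c' : G.Walk w' w'), c'.IsCycle ∧
      c.length < 2 * c'.length ∧ c'.length < c.length := by
  classical
  have hconn : c.toSubgraph.coe.Connected := c.toSubgraph_connected.coe
  obtain ⟨x', y', hx', hy', p', hp', hshort', hint⟩ :=
    extract c.toSubgraph hconn p.length p rfl hp hx hy hshort
  have hne : x' ≠ y' := by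
    rintro rfl
    have h0 : c.toSubgraph.coe.dist ⟨x', hx'⟩ ⟨x', hy'⟩ = 0 := SimpleGraph.dist_self
    omega
  have hx'c : x' ∈ c.support := by rwa [← Walk.mem_verts_toSubgraph]
  set c₁ := c.rotate x' hx'c with hc₁def
  have hc₁ : c₁.IsCycle := hc.rotate hx'c
  have hy'c : y' ∈ c₁.support := by
    rw [← Walk.mem_verts_toSubgraph, Walk.toSubgraph_rotate]
    exact hy'
  set A := c₁.takeUntil y' hy'c with hAdef
  set B := c₁.dropUntil y' hy'c with hBdef
  obtain ⟨hA, hB⟩ := arc_paths hc₁ hy'c hne.symm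
  have hspec : A.append B = c₁ := c₁.take_spec hy'c
  have hc₁len : c₁.length = c.length := by
    rw [hc₁def, Walk.rotate, Walk.length_append, Nat.add_comm, ← Walk.length_append,
      c.take_spec hx'c]
  have hlenc : A.length + B.length = c.length := by
    rw [← Walk.length_append, hspec, hc₁len]
  have htsub : c₁.toSubgraph = c.toSubgraph := Walk.toSubgraph_rotate c hx'c
  have hAle : A.toSubgraph ≤ c.toSubgraph := by
    rw [← htsub, ← hspec, Walk.toSubgraph_append]
    exact le_sup_left
  have hBle : B.toSubgraph ≤ c.toSubgraph := by
    rw [← htsub, ← hspec, Walk.toSubgraph_append]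
    exact le_sup_right
  obtain ⟨A', hA'len⟩ := exists_coe_walk A hAle hx' hy'
  obtain ⟨B', hB'len⟩ := exists_coe_walk B hBle hy' hx'
  have hdA : c.toSubgraph.coe.dist ⟨x', hx'⟩ ⟨y', hy'⟩ ≤ A.length :=
    hA'len ▸ SimpleGraph.dist_le A'
  have hdB : c.toSubgraph.coe.dist ⟨x', hx'⟩ ⟨y', hy'⟩ ≤ B.length := by
    rw [SimpleGraph.dist_comm]
    exact hB'len ▸ SimpleGraph.dist_le B'
  have hpA : p'.length < A.length := lt_of_lt_of_le hshort' hdA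
  have hpB : p'.length < B.length := lt_of_lt_of_le hshort' hdB
  have hp1 : 1 ≤ p'.length := by
    rcases Nat.eq_zero_or_pos p'.length with h | h
    · exact absurd (Walk.eq_of_length_eq_zero h) hne
    · exact h
  have hsubA : ∀ v ∈ A.support, v ∈ c.toSubgraph.verts := fun v hv => by
    rw [← htsub, Walk.mem_verts_toSubgraph]
    exact c₁.support_takeUntil_subset hy'c hv
  have hsubB : ∀ v ∈ B.support, v ∈ c.toSubgraph.verts := fun v hv => by
    rw [← htsub, Walk.mem_verts_toSubgraph]
    exact c₁.support_dropUntil_subset hy'c hv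
  rcases le_or_gt A.length B.length with hab | hab
  · refine ⟨x', p'.append B, ?_, ?_, ?_⟩
    · refine glue_isCycle hp' hB hne (by omega) ?_
      intro v hvq hvr
      exact hint v hvq (hsubB v hvr)
    · rw [Walk.length_append]; omega
    · rw [Walk.length_append]; omega
  · refine ⟨x', p'.append A.reverse, ?_, ?_, ?_⟩
    · refine glue_isCycle hp' hA.reverse hne (by rw [Walk.length_reverse]; omega) ?_
      intro v hvq hvr
      rw [Walk.support_reverse, List.mem_reverse] at hvr
      exact hint v hvq (hsubA v hvr)
    · rw [Walk.length_append, Walk.length_reverse]; omega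
    · rw [Walk.length_append, Walk.length_reverse]; omega
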